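/- Let h_u, h_v ∈ C^n and α_u ≥ α_v ≥ 0. Then α_u·log(1 + h_u† h_u) + α_v·log(1 + h_v†(I + h_u h_u†)^{-1} h_v) ≥ α_v·log(1 + h_v† h_v) + α_u·log(1 + h_u†(I + h_v h_v†)^{-1} h_u), i.e., among the two SIC decoding orders it is (weakly) better to decode the higher-weight user last (cancel it first). -/

import Mathlib

open Matrix

variable {n : ℕ}

lemma dot_self_coe (v : Fin n → ℂ) : star v ⬝ᵥ v = (((star v ⬝ᵥ v).re : ℝ) : ℂ) := by
  have : star v ⬝ᵥ v = ((∑ i, Complex.normSq (v i) : ℝ) : ℂ) := by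
    push_cast
    simp [dotProduct, Complex.star_def, ← Complex.normSq_eq_conj_mul_self]
  rw [this]; simp

lemma dot_self_re_nonneg (v : Fin n → ℂ) : 0 ≤ (star v ⬝ᵥ v).re := by
  have : star v ⬝ᵥ v = ((∑ i, Complex.normSq (v i) : ℝ) : ℂ) := by
    push_cast
    simp [dotProduct, Complex.star_def, ← Complex.normSq_eq_conj_mul_self]
  rw [this, Complex.ofReal_re]
  exact Finset.sum_nonneg fun i _ => Complex.normSq_nonneg _

lemma one_add_dot_ne (v : Fin n → ℂ) : (1 : ℂ) + star v ⬝ᵥ v ≠ 0 := by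
  rw [dot_self_coe]
  intro h
  have := congrArg Complex.re h
  simp at this
  linarith [dot_self_re_nonneg v]

lemma vmv_mul (v : Fin n → ℂ) :
    vecMulVec v (star v) * vecMulVec v (star v) = (star v ⬝ᵥ v) • vecMulVec v (star v) := by
  ext i j
  simp only [mul_apply, vecMulVec_apply, Matrix.smul_apply, smul_eq_mul, dotProduct, Finset.sum_mul]
  exact Finset.sum_congr rfl fun k _ => by ring

lemma inv_one_add (v : Fin n → ℂ) :
    ((1 : Matrix (Fin n) (Fin n) ℂ) + vecMulVec v (star v))⁻¹
      = 1 - ((1 + star v ⬝ᵥ v)⁻¹) • vecMulVec v (star v) := by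
  apply Matrix.inv_eq_right_inv
  have key : ((1 : Matrix (Fin n) (Fin n) ℂ) + vecMulVec v (star v)) *
      (1 - ((1 + star v ⬝ᵥ v)⁻¹) • vecMulVec v (star v))
      = 1 + (1 - (1 + star v ⬝ᵥ v)⁻¹ * (1 + star v ⬝ᵥ v)) • vecMulVec v (star v) := by
    rw [mul_sub, add_mul, add_mul, Matrix.mul_smul, Matrix.mul_smul, one_mul, mul_one,
      vmv_mul, smul_smul]
    simp only [one_mul, mul_one]
    module
  rw [key, inv_mul_cancel₀ (one_add_dot_ne v), sub_self, zero_smul, add_zero]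

lemma vecMulVec_mulVec' (v w u : Fin n → ℂ) :
    vecMulVec v w *ᵥ u = (w ⬝ᵥ u) • v := by
  ext i
  simp only [mulVec, dotProduct, vecMulVec_apply, Pi.smul_apply, smul_eq_mul, Finset.mul_sum]
  rw [Finset.sum_mul]
  congr 1; ext k; ring

lemma dot_inv (u v : Fin n → ℂ) :
    star u ⬝ᵥ (((1 : Matrix (Fin n) (Fin n) ℂ) + vecMulVec v (star v))⁻¹ *ᵥ u)
      = star u ⬝ᵥ u - (1 + star v ⬝ᵥ v)⁻¹ * ((star v ⬝ᵥ u) * star (star v ⬝ᵥ u)) := by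
  rw [inv_one_add, Matrix.sub_mulVec, Matrix.smul_mulVec, vecMulVec_mulVec',
    Matrix.one_mulVec, dotProduct_sub, dotProduct_smul, smul_eq_mul, dotProduct_smul,
    smul_eq_mul]
  have : star u ⬝ᵥ v = star (star v ⬝ᵥ u) := by rw [star_dotProduct]
  rw [this]

lemma dot_inv_re (u v : Fin n → ℂ) :
    (star u ⬝ᵥ (((1 : Matrix (Fin n) (Fin n) ℂ) + vecMulVec v (star v))⁻¹ *ᵥ u)).re
      = (star u ⬝ᵥ u).re - (1 + (star v ⬝ᵥ v).re)⁻¹ * Complex.normSq (star v ⬝ᵥ u) := by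
  rw [dot_inv]
  have h1 : (1 : ℂ) + star v ⬝ᵥ v = ((1 + (star v ⬝ᵥ v).re : ℝ) : ℂ) := by
    conv_lhs => rw [dot_self_coe v]
    push_cast; ring
  have h2 : (star v ⬝ᵥ u) * star (star v ⬝ᵥ u) = (Complex.normSq (star v ⬝ᵥ u) : ℂ) := by
    rw [Complex.star_def, Complex.mul_conj]
  rw [h1, h2, ← Complex.ofReal_inv, ← Complex.ofReal_mul, Complex.sub_re, Complex.ofReal_re]

lemma cauchy (u v : Fin n → ℂ) :
    Complex.normSq (star v ⬝ᵥ u) ≤ (star v ⬝ᵥ v).re * (star u ⬝ᵥ u).re := by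
  set V : EuclideanSpace ℂ (Fin n) := (WithLp.equiv 2 _).symm v
  set U : EuclideanSpace ℂ (Fin n) := (WithLp.equiv 2 _).symm u
  have h1 : (inner ℂ V U : ℂ) = star v ⬝ᵥ u :=
    (EuclideanSpace.inner_toLp_toLp v u).trans (dotProduct_comm _ _)
  have h2 : (inner ℂ V V : ℂ) = star v ⬝ᵥ v :=
    (EuclideanSpace.inner_toLp_toLp v v).trans (dotProduct_comm _ _)
  have h3 : (inner ℂ U U : ℂ) = star u ⬝ᵥ u :=
    (EuclideanSpace.inner_toLp_toLp u u).trans (dotProduct_comm _ _)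
  have hcs := norm_inner_le_norm (𝕜 := ℂ) V U
  have hnV : ‖V‖ ^ 2 = (star v ⬝ᵥ v).re := by
    rw [← h2, ← inner_self_eq_norm_sq (𝕜 := ℂ)]
    rfl
  have hnU : ‖U‖ ^ 2 = (star u ⬝ᵥ u).re := by
    rw [← h3, ← inner_self_eq_norm_sq (𝕜 := ℂ)]
    rfl
  have : Complex.normSq (star v ⬝ᵥ u) = ‖(star v ⬝ᵥ u : ℂ)‖ ^ 2 := by
    rw [Complex.normSq_eq_norm_sq]
  rw [this, ← h1]
  calc ‖(inner ℂ V U : ℂ)‖ ^ 2 ≤ (‖V‖ * ‖U‖) ^ 2 := by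
        apply pow_le_pow_left₀ (norm_nonneg _) hcs _
      _ = (star v ⬝ᵥ v).re * (star u ⬝ᵥ u).re := by rw [mul_pow, hnV, hnU]

lemma keyineq (su sv g αu αv : ℝ) (hsu : 0 ≤ su) (hsv : 0 ≤ sv) (hg : 0 ≤ g)
    (hcs : g ≤ sv * su) (hαv : 0 ≤ αv) (hαuv : αv ≤ αu) :
    αv * Real.log (1 + sv) + αu * Real.log (1 + (su - (1 + sv)⁻¹ * g))
      ≤ αu * Real.log (1 + su) + αv * Real.log (1 + (sv - (1 + su)⁻¹ * g)) := by
  have ha : (0:ℝ) < 1 + su := by linarith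
  have hb : (0:ℝ) < 1 + sv := by linarith
  have hd : (0:ℝ) < (1 + su) * (1 + sv) - g := by nlinarith
  have h1 : 1 + (su - (1 + sv)⁻¹ * g) = ((1 + su) * (1 + sv) - g) / (1 + sv) := by
    field_simp; ring
  have h2 : 1 + (sv - (1 + su)⁻¹ * g) = ((1 + su) * (1 + sv) - g) / (1 + su) := by
    field_simp; ring
  rw [h1, h2, Real.log_div (ne_of_gt hd) (ne_of_gt hb),
    Real.log_div (ne_of_gt hd) (ne_of_gt ha)]
  have hlog : Real.log ((1 + su) * (1 + sv) - g)
      ≤ Real.log (1 + su) + Real.log (1 + sv) := by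
    rw [← Real.log_mul (ne_of_gt ha) (ne_of_gt hb)]
    exact Real.log_le_log hd (by nlinarith)
  nlinarith [mul_nonneg (sub_nonneg.2 hαuv) (sub_nonneg.2 hlog)]

/-- Among the two SIC decoding orders, it is weakly better to cancel the
higher-weight user first. -/
theorem sic_order_comparison (n : ℕ) (hu hv : Fin n → ℂ) (αu αv : ℝ)
    (hαv : 0 ≤ αv) (hαuv : αv ≤ αu) :
    αv * Real.log (1 + (star hv ⬝ᵥ hv).re) +
      αu * Real.log (1 + (star hu ⬝ᵥ
        (((1 : Matrix (Fin n) (Fin n) ℂ) + Matrix.vecMulVec hv (star hv))⁻¹ *ᵥ hu)).re)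
    ≤ αu * Real.log (1 + (star hu ⬝ᵥ hu).re) +
      αv * Real.log (1 + (star hv ⬝ᵥ
        (((1 : Matrix (Fin n) (Fin n) ℂ) + Matrix.vecMulVec hu (star hu))⁻¹ *ᵥ hv)).re) := by
  rw [dot_inv_re hu hv, dot_inv_re hv hu]
  have hsym : Complex.normSq (star hu ⬝ᵥ hv) = Complex.normSq (star hv ⬝ᵥ hu) := by
    rw [show star hu ⬝ᵥ hv = star (star hv ⬝ᵥ hu) from star_dotProduct hu hv,
      Complex.star_def, Complex.normSq_conj]
  rw [hsym]
  exact keyineq _ _ _ _ _ (dot_self_re_nonneg hu) (dot_self_re_nonneg hv)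
    (Complex.normSq_nonneg _) (cauchy hu hv) hαv hαuv
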